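/- Let q be an odd prime and let F be a finite field of characteristic q. If Q is a subgroup of SL(2,F) isomorphic to the quaternion group of order 8, then the centralizer of Q in SL(2,F) is contained in Q. -/

import Mathlib

open Matrix

/-- Centralizer of a non-scalar 2x2 matrix consists of polynomials in it. -/
lemma lemC {F : Type*} [Field F] (A X : Matrix (Fin 2) (Fin 2) F)
    (hns : ¬(A 0 1 = 0 ∧ A 1 0 = 0 ∧ A 0 0 = A 1 1))
    (h : X * A = A * X) : ∃ α β : F, X = α • 1 + β • A := by
  have h00 : (X * A) 0 0 = (A * X) 0 0 := by rw [h]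
  have h01 : (X * A) 0 1 = (A * X) 0 1 := by rw [h]
  have h10 : (X * A) 1 0 = (A * X) 1 0 := by rw [h]
  simp only [Matrix.mul_apply, Fin.sum_univ_two] at h00 h01 h10
  by_cases hb : A 0 1 = 0
  · by_cases hc : A 1 0 = 0
    · -- diagonal, non-scalar case
      have had : A 0 0 ≠ A 1 1 := fun hd => hns ⟨hb, hc, hd⟩
      have hsub : A 0 0 - A 1 1 ≠ 0 := sub_ne_zero.mpr had
      refine ⟨X 0 0 - (X 0 0 - X 1 1) / (A 0 0 - A 1 1) * A 0 0,
        (X 0 0 - X 1 1) / (A 0 0 - A 1 1), ?_⟩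
      have hr : X 0 1 = 0 := by
        rcases mul_eq_zero.mp (show X 0 1 * (A 1 1 - A 0 0) = 0 by
          linear_combination h01 - X 0 0 * hb + X 1 1 * hb) with h | h
        · exact h
        · exact absurd (by linear_combination -h) hsub
      have hs : X 1 0 = 0 := by
        rcases mul_eq_zero.mp (show X 1 0 * (A 0 0 - A 1 1) = 0 by
          linear_combination h10 - X 1 1 * hc + X 0 0 * hc) with h | h
        · exact h
        · exact absurd h hsub
      ext i j
      fin_cases i <;> fin_cases j <;>
        simp [Matrix.one_apply, hb, hc, hr, hs] <;> field_simp <;> ring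
    · -- c ≠ 0 case
      refine ⟨X 0 0 - X 1 0 / A 1 0 * A 0 0, X 1 0 / A 1 0, ?_⟩
      ext i j
      fin_cases i <;> fin_cases j <;> simp [Matrix.one_apply] <;> field_simp
      · linear_combination h00
      · linear_combination h10
  · -- b ≠ 0 case
    refine ⟨X 0 0 - X 0 1 / A 0 1 * A 0 0, X 0 1 / A 0 1, ?_⟩
    ext i j
    fin_cases i <;> fin_cases j <;> simp [Matrix.one_apply] <;> field_simp
    · linear_combination -h00
    · linear_combination -h01

/-- An involution in SL(2,F), char ≠ 2, other than 1, is -1. -/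
lemma sq_one_lemma {F : Type*} [Field F] (h2 : (2:F) ≠ 0)
    (z : Matrix (Fin 2) (Fin 2) F)
    (hz : z * z = 1) (hdet : z.det = 1) (hne : z ≠ 1) : z = -1 := by
  have e00 : (z * z) 0 0 = (1 : Matrix (Fin 2) (Fin 2) F) 0 0 := by rw [hz]
  have e01 : (z * z) 0 1 = (1 : Matrix (Fin 2) (Fin 2) F) 0 1 := by rw [hz]
  have e10 : (z * z) 1 0 = (1 : Matrix (Fin 2) (Fin 2) F) 1 0 := by rw [hz]
  have e11 : (z * z) 1 1 = (1 : Matrix (Fin 2) (Fin 2) F) 1 1 := by rw [hz]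
  simp only [Matrix.mul_apply, Fin.sum_univ_two, Matrix.one_apply] at e00 e01 e10 e11
  norm_num at e00 e01 e10 e11
  rw [Matrix.det_fin_two] at hdet
  have htr : z 0 0 + z 1 1 ≠ 0 := by
    intro h
    apply h2
    linear_combination -e00 - hdet + z 0 0 * h
  have hb : z 0 1 = 0 := by
    rcases mul_eq_zero.mp (show z 0 1 * (z 0 0 + z 1 1) = 0 by linear_combination e01)
      with h | h
    · exact h
    · exact absurd h htr
  have hc : z 1 0 = 0 := by
    rcases mul_eq_zero.mp (show z 1 0 * (z 0 0 + z 1 1) = 0 by linear_combination e10)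
      with h | h
    · exact h
    · exact absurd h htr
  have ha2 : z 0 0 * z 0 0 = 1 := by linear_combination e00 - z 1 0 * hb
  have hda : z 1 1 = z 0 0 := by
    linear_combination z 0 0 * hdet - z 1 1 * ha2 + z 0 0 * z 1 0 * hb
  rcases mul_eq_zero.mp (show (z 0 0 - 1) * (z 0 0 + 1) = 0 by linear_combination ha2)
    with h | h
  · exfalso
    apply hne
    have ha : z 0 0 = 1 := by linear_combination h
    ext i j
    fin_cases i <;> fin_cases j <;> simp [Matrix.one_apply, hb, hc, ha, hda]
  · have ha : z 0 0 = -1 := by linear_combination h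
    ext i j
    fin_cases i <;> fin_cases j <;> simp [Matrix.one_apply, hb, hc, ha, hda]

theorem stmt_3 (q : ℕ) (hq : Nat.Prime q) (hodd : Odd q)
    (F : Type*) [Field F] [Fintype F] [CharP F q]
    (Q : Subgroup (Matrix.SpecialLinearGroup (Fin 2) F))
    (hQ : Nonempty (Q ≃* QuaternionGroup 2)) :
    Subgroup.centralizer (Q : Set (Matrix.SpecialLinearGroup (Fin 2) F)) ≤ Q := by
  obtain ⟨e⟩ := hQ
  have h2 : (2 : F) ≠ 0 := by
    intro h
    have hdvd : q ∣ 2 := (CharP.cast_eq_zero_iff F q 2).mp (by exact_mod_cast h)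
    have hq2 := (Nat.prime_dvd_prime_iff_eq hq Nat.prime_two).mp hdvd
    rw [hq2] at hodd
    exact (Nat.not_odd_iff_even.mpr even_two) hodd
  intro x hx
  set A0 : Q := e.symm (QuaternionGroup.a 1) with hA0
  set B0 : Q := e.symm (QuaternionGroup.xa 0) with hB0
  have r2 : (A0 * B0) * A0 = B0 := by
    apply e.injective
    simp only [_root_.map_mul, hA0, hB0, MulEquiv.apply_symm_apply]
    decide
  have r3 : A0 ^ 2 ≠ 1 := by
    intro h
    have h' := congrArg e h
    simp only [map_pow, _root_.map_one, hA0, MulEquiv.apply_symm_apply] at h'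
    exact absurd h' (by decide)
  have r4 : A0 ^ 4 = 1 := by
    apply e.injective
    simp only [map_pow, _root_.map_one, hA0, MulEquiv.apply_symm_apply]
    decide
  -- pass to matrices
  set U : Matrix (Fin 2) (Fin 2) F := ((A0 : Matrix.SpecialLinearGroup (Fin 2) F) :
    Matrix (Fin 2) (Fin 2) F) with hU
  set V : Matrix (Fin 2) (Fin 2) F := ((B0 : Matrix.SpecialLinearGroup (Fin 2) F) :
    Matrix (Fin 2) (Fin 2) F) with hV
  have mUV : U * V * U = V := by
    have h' := congrArg
      (fun g : Q => ((g : Matrix.SpecialLinearGroup (Fin 2) F) : Matrix (Fin 2) (Fin 2) F)) r2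
    simpa using h'
  have m4 : U ^ 4 = 1 := by
    have h' := congrArg
      (fun g : Q => ((g : Matrix.SpecialLinearGroup (Fin 2) F) : Matrix (Fin 2) (Fin 2) F)) r4
    simpa using h'
  have mne : U ^ 2 ≠ 1 := by
    intro h
    apply r3
    have : (((A0 ^ 2 : Q) : Matrix.SpecialLinearGroup (Fin 2) F) :
        Matrix (Fin 2) (Fin 2) F) = ((1 : Q) : Matrix (Fin 2) (Fin 2) F) := by
      push_cast
      simpa using h
    exact Subtype.coe_injective (Subtype.coe_injective this)
  have hdetU : U.det = 1 := (A0 : Matrix.SpecialLinearGroup (Fin 2) F).prop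
  have hdetV : V.det = 1 := (B0 : Matrix.SpecialLinearGroup (Fin 2) F).prop
  have hzneg : U ^ 2 = -1 := by
    apply sq_one_lemma h2 _ (by rw [← pow_add]; exact m4) _ mne
    rw [Matrix.det_pow, hdetU, one_pow]
  have anti : V * U = -(U * V) := by
    have key : -(V * U) = U * V := by
      calc -(V * U) = (U ^ 2 * V) * U := by rw [hzneg]; noncomm_ring
        _ = U * (U * V * U) := by noncomm_ring
        _ = U * V := by rw [mUV]
    rw [← key, neg_neg]
  -- the centralizer element
  have hcent := Subgroup.mem_centralizer_iff.mp hx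
  set X : Matrix (Fin 2) (Fin 2) F := (x : Matrix (Fin 2) (Fin 2) F) with hXdef
  have hXU : X * U = U * X := by
    have h' := congrArg (fun g : Matrix.SpecialLinearGroup (Fin 2) F =>
      (g : Matrix (Fin 2) (Fin 2) F)) (hcent _ A0.2)
    simpa using h'.symm
  have hXV : X * V = V * X := by
    have h' := congrArg (fun g : Matrix.SpecialLinearGroup (Fin 2) F =>
      (g : Matrix (Fin 2) (Fin 2) F)) (hcent _ B0.2)
    simpa using h'.symm
  -- U is not scalar
  have hns : ¬(U 0 1 = 0 ∧ U 1 0 = 0 ∧ U 0 0 = U 1 1) := by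
    rintro ⟨hb, hc, hd⟩
    have h1 : (U * U) 0 0 = (-1 : Matrix (Fin 2) (Fin 2) F) 0 0 := by
      rw [← pow_two, hzneg]
    simp [Matrix.mul_apply, Fin.sum_univ_two, hb, hc, Matrix.one_apply] at h1
    rw [Matrix.det_fin_two, hb, hc, ← hd] at hdetU
    exact h2 (by linear_combination h1 - hdetU)
  obtain ⟨α, β, hX⟩ := lemC U X hns hXU
  have hβ : β = 0 := by
    have hcomm := hXV
    rw [hX, add_mul, mul_add, smul_mul_assoc, smul_mul_assoc, one_mul,
      mul_smul_comm, mul_smul_comm, mul_one, anti, smul_neg] at hcomm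
    have hkey : (β + β) • (U * V) = 0 := by
      rw [add_smul]
      exact eq_neg_iff_add_eq_zero.mp (add_left_cancel hcomm)
    rcases smul_eq_zero.mp hkey with h | h
    · rcases mul_eq_zero.mp (show (2 : F) * β = 0 by linear_combination h) with h' | h'
      · exact absurd h' h2
      · exact h'
    · exfalso
      have : (U * V).det = 1 := by rw [Matrix.det_mul, hdetU, hdetV, one_mul]
      rw [h, Matrix.det_zero] at this
      exact one_ne_zero this.symm
  rw [hβ, zero_smul, add_zero] at hX
  have hdetX : X.det = 1 := x.prop
  rw [hX, Matrix.det_smul, Matrix.det_one, mul_one] at hdetX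
  simp only [Fintype.card_fin] at hdetX
  rcases mul_eq_zero.mp (show (α - 1) * (α + 1) = 0 by linear_combination hdetX) with h | h
  · have hα : α = 1 := by linear_combination h
    have hx1 : x = 1 := by
      apply Subtype.ext
      show X = _
      rw [hX, hα, one_smul]
      exact Matrix.SpecialLinearGroup.coe_one.symm
    rw [hx1]
    exact Q.one_mem
  · have hα : α = -1 := by linear_combination h
    have hx1 : x = (A0 : Matrix.SpecialLinearGroup (Fin 2) F) ^ 2 := by
      apply Subtype.ext
      show X = _
      rw [hX, hα]
      have hcp : ((((A0 : Matrix.SpecialLinearGroup (Fin 2) F)) ^ 2 :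
          Matrix.SpecialLinearGroup (Fin 2) F) : Matrix (Fin 2) (Fin 2) F) = U ^ 2 :=
        Matrix.SpecialLinearGroup.coe_pow _ _
      show _ = ((((A0 : Matrix.SpecialLinearGroup (Fin 2) F)) ^ 2 :
          Matrix.SpecialLinearGroup (Fin 2) F) : Matrix (Fin 2) (Fin 2) F)
      rw [hcp, hzneg]
      simp
    rw [hx1]
    exact pow_mem A0.2 2
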